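/- Let n = 2^α with α ≥ 2. Then twice the number of edges of the permutability graph of subgroups Γ(D_n) of the dihedral group D_n equals 2^{α+1}(6α − 7) + α² − 5α + 14. -/

import Mathlib

open scoped Pointwise

/-- The permutability graph of non-normal subgroups `Γ_N(G)`: vertices are the
non-normal (hence proper) subgroups of `G`, and two distinct vertices are adjacent
iff the corresponding subgroups permute, i.e. `HK = KH` as subsets of `G`. -/
def permGraphN (G : Type*) [Group G] :
    SimpleGraph {H : Subgroup G // ¬ H.Normal} where
  Adj H K := H ≠ K ∧ (H.1 : Set G) * (K.1 : Set G) = (K.1 : Set G) * (H.1 : Set G)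
  symm := ⟨fun _ _ ⟨hne, h⟩ => ⟨hne.symm, h.symm⟩⟩
  loopless := ⟨fun _ ⟨hne, _⟩ => hne rfl⟩

/-- The permutability graph of subgroups `Γ(G)`: vertices are the proper nontrivial
subgroups of `G`, and two distinct vertices are adjacent iff the corresponding
subgroups permute, i.e. `HK = KH` as subsets of `G`. -/
def permGraph (G : Type*) [Group G] :
    SimpleGraph {H : Subgroup G // H ≠ ⊥ ∧ H ≠ ⊤} where
  Adj H K := H ≠ K ∧ (H.1 : Set G) * (K.1 : Set G) = (K.1 : Set G) * (H.1 : Set G)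
  symm := ⟨fun _ _ ⟨hne, h⟩ => ⟨hne.symm, h.symm⟩⟩
  loopless := ⟨fun _ ⟨hne, _⟩ => hne rfl⟩

open DihedralGroup

namespace S12

variable {n : ℕ}

theorem r_inv (i : ZMod n) : (r i)⁻¹ = r (-i) := rfl
theorem sr_inv (i : ZMod n) : (sr i)⁻¹ = sr i := rfl

/-- dihedral-type subgroup generated by `r d` and `sr i` (for `d ∣ n`; defined for all). -/
def dsub (d i : ZMod n) : Subgroup (DihedralGroup n) where
  carrier := {x | (∃ t, x = r (t * d)) ∨ (∃ t, x = sr (i + t * d))}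
  one_mem' := Or.inl ⟨0, by rw [one_def]; ring_nf⟩
  mul_mem' := by
    rintro _ _ (⟨t, rfl⟩ | ⟨t, rfl⟩) (⟨s, rfl⟩ | ⟨s, rfl⟩)
    · exact Or.inl ⟨t + s, by rw [r_mul_r]; ring_nf⟩
    · exact Or.inr ⟨s - t, by rw [r_mul_sr]; ring_nf⟩
    · exact Or.inr ⟨t + s, by rw [sr_mul_r]; ring_nf⟩
    · exact Or.inl ⟨s - t, by rw [sr_mul_sr]; ring_nf⟩
  inv_mem' := by
    rintro _ (⟨t, rfl⟩ | ⟨t, rfl⟩)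
    · exact Or.inl ⟨-t, by rw [r_inv]; ring_nf⟩
    · exact Or.inr ⟨t, by rw [sr_inv]⟩

/-- cyclic rotation subgroup generated by `r d`. -/
def csub (d : ZMod n) : Subgroup (DihedralGroup n) where
  carrier := {x | ∃ t, x = r (t * d)}
  one_mem' := ⟨0, by rw [one_def]; ring_nf⟩
  mul_mem' := by
    rintro _ _ ⟨t, rfl⟩ ⟨s, rfl⟩
    exact ⟨t + s, by rw [r_mul_r]; ring_nf⟩
  inv_mem' := by
    rintro _ ⟨t, rfl⟩
    exact ⟨-t, by rw [r_inv]; ring_nf⟩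

theorem mem_dsub {d i : ZMod n} {x : DihedralGroup n} :
    x ∈ dsub d i ↔ (∃ t, x = r (t * d)) ∨ (∃ t, x = sr (i + t * d)) := Iff.rfl

theorem mem_csub {d : ZMod n} {x : DihedralGroup n} :
    x ∈ csub d ↔ ∃ t, x = r (t * d) := Iff.rfl

@[simp] theorem r_mem_dsub {d i m : ZMod n} : r m ∈ dsub d i ↔ ∃ t, m = t * d := by
  rw [mem_dsub]
  constructor
  · rintro (⟨t, ht⟩ | ⟨t, ht⟩)
    · exact ⟨t, by injection ht⟩
    · exact absurd ht (by simp)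
  · rintro ⟨t, rfl⟩; exact Or.inl ⟨t, rfl⟩

@[simp] theorem sr_mem_dsub {d i m : ZMod n} : sr m ∈ dsub d i ↔ ∃ t, m = i + t * d := by
  rw [mem_dsub]
  constructor
  · rintro (⟨t, ht⟩ | ⟨t, ht⟩)
    · exact absurd ht (by simp)
    · exact ⟨t, by injection ht⟩
  · rintro ⟨t, rfl⟩; exact Or.inr ⟨t, rfl⟩

@[simp] theorem r_mem_csub {d m : ZMod n} : r m ∈ csub d ↔ ∃ t, m = t * d := by
  rw [mem_csub]
  constructor
  · rintro ⟨t, ht⟩; exact ⟨t, by injection ht⟩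
  · rintro ⟨t, rfl⟩; exact ⟨t, rfl⟩

@[simp] theorem sr_not_mem_csub {d m : ZMod n} : sr m ∉ csub d := by
  rintro ⟨t, ht⟩; exact absurd ht (by simp)

instance csub_normal (d : ZMod n) : (csub d).Normal := by
  constructor
  rintro _ ⟨t, rfl⟩ g
  rcases g with j | j
  · refine ⟨t, ?_⟩
    rw [r_inv, r_mul_r, r_mul_r]; ring_nf
  · refine ⟨-t, ?_⟩
    rw [sr_inv, sr_mul_r, sr_mul_sr]; ring_nf


variable {α : ℕ}

instance : NeZero (2^α) := ⟨pow_ne_zero _ two_ne_zero⟩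

theorem pow_dvd_val_iff {k : ℕ} (hk : k ≤ α) (x : ZMod (2^α)) :
    (∃ t : ZMod (2^α), x = t * (2^k : ZMod (2^α))) ↔ 2^k ∣ x.val := by
  constructor
  · rintro ⟨t, rfl⟩
    have h2 : ((2:ZMod (2^α))^k) = ((2^k : ℕ) : ZMod (2^α)) := by push_cast; ring
    rw [h2, ZMod.val_mul, ZMod.val_natCast]
    rw [Nat.dvd_mod_iff (pow_dvd_pow 2 hk)]
    exact dvd_mul_of_dvd_right ((Nat.dvd_mod_iff (pow_dvd_pow 2 hk)).mpr dvd_rfl) _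
  · rintro ⟨c, hc⟩
    refine ⟨(c : ZMod (2^α)), ?_⟩
    have := (ZMod.natCast_rightInverse (n := 2^α) x).symm
    rw [this, hc]
    push_cast; ring

theorem cast_int_sub_val (i j : ZMod (2^α)) :
    ((2:ℤ)^α) ∣ (((j - i).val : ℤ) - ((j.val : ℤ) - (i.val : ℤ))) := by
  have h : ((2^α : ℕ) : ℤ) ∣ (((j - i).val : ℤ) - ((j.val : ℤ) - (i.val : ℤ))) := by
    rw [← ZMod.intCast_zmod_eq_zero_iff_dvd]
    push_cast
    rw [ZMod.natCast_rightInverse (j - i), ZMod.natCast_rightInverse j,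
      ZMod.natCast_rightInverse i]
    ring
  simpa using h

theorem exists_eq_add_iff {k : ℕ} (hk : k ≤ α) (i j : ZMod (2^α)) :
    (∃ t : ZMod (2^α), j = i + t * 2^k) ↔ i.val ≡ j.val [MOD 2^k] := by
  have h1 : (∃ t : ZMod (2^α), j = i + t * 2^k) ↔ ∃ t : ZMod (2^α), j - i = t * 2^k := by
    constructor
    · rintro ⟨t, ht⟩; exact ⟨t, by rw [ht]; ring⟩
    · rintro ⟨t, ht⟩; exact ⟨t, by rw [← ht]; ring⟩
  rw [h1, pow_dvd_val_iff hk, Nat.modEq_iff_dvd]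
  push_cast
  have key := cast_int_sub_val (α := α) i j
  have hdvd : ((2:ℤ)^k) ∣ ((2:ℤ)^α) := pow_dvd_pow 2 hk
  constructor
  · intro h
    have h' : ((2:ℤ)^k) ∣ ((j - i).val : ℤ) := by exact_mod_cast h
    have h2 := dvd_sub h' (dvd_trans hdvd key)
    simpa using h2
  · intro h
    have h2 := dvd_add h (dvd_trans hdvd key)
    have h3 : ((2:ℤ)^k) ∣ ((j - i).val : ℤ) := by simpa using h2
    exact_mod_cast h3

theorem two_mul_eq_zero {y : ZMod (2^α)} (hα : 1 ≤ α) (h : 2 * y = 0) :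
    ∃ w : ZMod (2^α), y = w * 2^(α-1) := by
  rw [pow_dvd_val_iff (Nat.sub_le α 1)]
  have h2 : ((2:ℤ)^α) ∣ (2 * (y.val : ℤ)) := by
    have : (((2 * (y.val:ℤ)) : ℤ) : ZMod (2^α)) = 0 := by
      push_cast
      rw [ZMod.natCast_rightInverse y]
      simpa using h
    have := (ZMod.intCast_zmod_eq_zero_iff_dvd _ _).mp this
    exact_mod_cast this
  have h3 : ((2:ℤ) * 2^(α-1)) ∣ (2 * (y.val : ℤ)) := by
    have : (2:ℤ) * 2^(α-1) = 2^α := by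
      rw [← pow_succ']
      congr 1
      omega
    rwa [this]
  have h4 : ((2:ℤ)^(α-1)) ∣ (y.val : ℤ) := by
    rcases h3 with ⟨c, hc⟩
    exact ⟨c, by linarith⟩
  exact_mod_cast h4


theorem normal_comm {G : Type*} [Group G] (H K : Subgroup G) [H.Normal] :
    (↑H * ↑K : Set G) = ↑K * ↑H := by
  rw [← Subgroup.normal_mul, ← Subgroup.mul_normal, sup_comm]

theorem dsub_comm_iff {α k l : ℕ} (hk : 1 ≤ k) (hkl : k ≤ l) (hl : l ≤ α)
    (i j : ZMod (2^α)) :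
    ((dsub (2^k) i : Set (DihedralGroup (2^α))) * (dsub (2^l) j : Set (DihedralGroup (2^α))) =
      (dsub (2^l) j : Set (DihedralGroup (2^α))) * (dsub (2^k) i : Set (DihedralGroup (2^α)))) ↔
    (∃ t : ZMod (2^α), j = i + t * 2^(k-1)) := by
  have e1 : (2:ZMod (2^α))^l = 2^(l-k) * 2^k := (pow_sub_mul_pow 2 hkl).symm
  have e2 : (2:ZMod (2^α))^k = 2 * 2^(k-1) := by
    rw [← pow_succ']
    congr 1
    omega
  have e3 : (2:ZMod (2^α))^l = 2^(l-k+1) * 2^(k-1) := by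
    rw [← pow_add]
    congr 1
    omega
  constructor
  · intro hset
    have hsri : sr i ∈ (dsub (2^k) i : Set (DihedralGroup (2^α))) := by
      rw [SetLike.mem_coe, sr_mem_dsub]
      exact ⟨0, by ring⟩
    have hsrj : sr j ∈ (dsub (2^l) j : Set (DihedralGroup (2^α))) := by
      rw [SetLike.mem_coe, sr_mem_dsub]
      exact ⟨0, by ring⟩
    have hmem : sr i * sr j ∈
        (dsub (2^l) j : Set (DihedralGroup (2^α))) * (dsub (2^k) i : Set (DihedralGroup (2^α))) := by
      rw [← hset]
      exact Set.mul_mem_mul hsri hsrj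
    rw [sr_mul_sr] at hmem
    rcases hmem with ⟨u, hu, v, hv, huv⟩
    rw [SetLike.mem_coe, mem_dsub] at hu hv
    rcases hu with ⟨t, rfl⟩ | ⟨t, rfl⟩ <;> rcases hv with ⟨s, rfl⟩ | ⟨s, rfl⟩
    · simp only [r_mul_r, r.injEq] at huv
      have h5 : t * 2^l + s * 2^k = j - i := huv
      refine ⟨t * 2^(l-k+1) + 2 * s, ?_⟩
      have h4 : (t * 2^(l-k+1) + 2 * s) * 2^(k-1) = t * 2^l + s * 2^k := by
        rw [e3, e2]; ring
      rw [h4, h5]; ring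
    · simp at huv
    · simp at huv
    · simp only [sr_mul_sr, r.injEq] at huv
      have h5 : (i + s * 2^k) - (j + t * 2^l) = j - i := huv
      have h6 : 2 * ((j - i) - (s - t * 2^(l-k)) * 2^(k-1)) = 0 := by
        have : 2 * (j - i) = s * 2^k - t * 2^l := by
          linear_combination -h5
        rw [mul_sub, this, e1, e2]
        ring
      obtain ⟨w, hw⟩ := two_mul_eq_zero (le_trans hk (le_trans hkl hl)) h6
      refine ⟨s - t * 2^(l-k) + w * 2^(α-k), ?_⟩
      have e4 : (2:ZMod (2^α))^(α-1) = 2^(α-k) * 2^(k-1) := by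
        rw [← pow_add]
        congr 1
        omega
      have h7 : j - i = (s - t * 2^(l-k) + w * 2^(α-k)) * 2^(k-1) := by
        have := hw
        rw [e4] at this
        have h8 : j - i = (s - t * 2^(l-k)) * 2^(k-1) + w * (2^(α-k) * 2^(k-1)) := by
          rw [← this]; ring
        rw [h8]; ring
      rw [← h7]; ring
  · rintro ⟨c, rfl⟩
    ext x
    simp only [Set.mem_mul]
    constructor
    · rintro ⟨u, hu, v, hv, rfl⟩
      rw [SetLike.mem_coe, mem_dsub] at hu hv
      rcases hu with ⟨t, rfl⟩ | ⟨t, rfl⟩ <;> rcases hv with ⟨s, rfl⟩ | ⟨s, rfl⟩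
      · refine ⟨r (s * 2^l), ?_, r (t * 2^k), ?_, ?_⟩
        · rw [SetLike.mem_coe, r_mem_dsub]; exact ⟨s, rfl⟩
        · rw [SetLike.mem_coe, r_mem_dsub]; exact ⟨t, rfl⟩
        · rw [r_mul_r, r_mul_r]; congr 1; ring
      · refine ⟨sr (i + c * 2^(k-1) + s * 2^l), ?_, r (-t * 2^k), ?_, ?_⟩
        · rw [SetLike.mem_coe, sr_mem_dsub]; exact ⟨s, rfl⟩
        · rw [SetLike.mem_coe, r_mem_dsub]; exact ⟨-t, rfl⟩
        · rw [sr_mul_r, r_mul_sr]; congr 1; ring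
      · refine ⟨r (-s * 2^l), ?_, sr (i + t * 2^k), ?_, ?_⟩
        · rw [SetLike.mem_coe, r_mem_dsub]; exact ⟨-s, rfl⟩
        · rw [SetLike.mem_coe, sr_mem_dsub]; exact ⟨t, rfl⟩
        · rw [r_mul_sr, sr_mul_r]; congr 1; ring
      · refine ⟨sr (i + c * 2^(k-1) + (-s) * 2^l), ?_, sr (i + (c - t) * 2^k), ?_, ?_⟩
        · rw [SetLike.mem_coe, sr_mem_dsub]; exact ⟨-s, rfl⟩
        · rw [SetLike.mem_coe, sr_mem_dsub]; exact ⟨c - t, rfl⟩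
        · rw [sr_mul_sr, sr_mul_sr]; congr 1; rw [e3, e2]; ring
    · rintro ⟨u, hu, v, hv, rfl⟩
      rw [SetLike.mem_coe, mem_dsub] at hu hv
      rcases hu with ⟨t, rfl⟩ | ⟨t, rfl⟩ <;> rcases hv with ⟨s, rfl⟩ | ⟨s, rfl⟩
      · refine ⟨r (s * 2^k), ?_, r (t * 2^l), ?_, ?_⟩
        · rw [SetLike.mem_coe, r_mem_dsub]; exact ⟨s, rfl⟩
        · rw [SetLike.mem_coe, r_mem_dsub]; exact ⟨t, rfl⟩
        · rw [r_mul_r, r_mul_r]; congr 1; ring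
      · refine ⟨sr (i + s * 2^k), ?_, r (-t * 2^l), ?_, ?_⟩
        · rw [SetLike.mem_coe, sr_mem_dsub]; exact ⟨s, rfl⟩
        · rw [SetLike.mem_coe, r_mem_dsub]; exact ⟨-t, rfl⟩
        · rw [sr_mul_r, r_mul_sr]; congr 1; ring
      · refine ⟨r (-s * 2^k), ?_, sr (i + c * 2^(k-1) + t * 2^l), ?_, ?_⟩
        · rw [SetLike.mem_coe, r_mem_dsub]; exact ⟨-s, rfl⟩
        · rw [SetLike.mem_coe, sr_mem_dsub]; exact ⟨t, rfl⟩
        · rw [r_mul_sr, sr_mul_r]; congr 1; ring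
      · refine ⟨sr (i + (c - s) * 2^k), ?_, sr (i + c * 2^(k-1) + (-t) * 2^l), ?_, ?_⟩
        · rw [SetLike.mem_coe, sr_mem_dsub]; exact ⟨c - s, rfl⟩
        · rw [SetLike.mem_coe, sr_mem_dsub]; exact ⟨-t, rfl⟩
        · rw [sr_mul_sr, sr_mul_sr]; congr 1; rw [e3, e2]; ring


theorem val_two_pow {α k : ℕ} (hk : k < α) : ((2:ZMod (2^α))^k).val = 2^k := by
  have h2 : ((2:ZMod (2^α))^k) = ((2^k : ℕ) : ZMod (2^α)) := by push_cast; ring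
  rw [h2, ZMod.val_natCast, Nat.mod_eq_of_lt (Nat.pow_lt_pow_right one_lt_two hk)]

theorem two_pow_top {α : ℕ} : ((2:ZMod (2^α))^α) = 0 := by
  have h2 : ((2:ZMod (2^α))^α) = ((2^α : ℕ) : ZMod (2^α)) := by push_cast; ring
  rw [h2, ZMod.natCast_self]

/-- every additive subgroup of `ZMod (2^α)` is the set of multiples of some `2^k`. -/
theorem addsubgroup_char {α : ℕ} (S : AddSubgroup (ZMod (2^α))) :
    ∃ k, k ≤ α ∧ ∀ x : ZMod (2^α), x ∈ S ↔ ∃ t : ZMod (2^α), x = t * 2^k := by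
  set f := Int.castAddHom (ZMod (2^α)) with hf
  set T := S.comap f with hT
  obtain ⟨d, hd⟩ := Int.subgroup_cyclic T
  have hmemT : ∀ y : ℤ, y ∈ T ↔ d ∣ y := by
    intro y
    rw [hd, AddSubgroup.mem_closure_singleton]
    constructor
    · rintro ⟨c, rfl⟩; exact ⟨c, by simp [zsmul_eq_mul, mul_comm]⟩
    · rintro ⟨c, rfl⟩; exact ⟨c, by simp [zsmul_eq_mul, mul_comm]⟩
  have htop : ((2:ℤ)^α) ∈ T := by
    have : f ((2:ℤ)^α) = 0 := by
      simp only [hf, Int.coe_castAddHom]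
      push_cast
      exact two_pow_top
    simp only [hT, AddSubgroup.mem_comap, this]
    exact S.zero_mem
  have hdvd : d ∣ (2:ℤ)^α := (hmemT _).mp htop
  have hnat : d.natAbs ∣ 2^α := by
    have h := Int.natAbs_dvd_natAbs.mpr hdvd
    rwa [show ((2:ℤ)^α).natAbs = 2^α by simp [Int.natAbs_pow]] at h
  obtain ⟨k, hk, hdk⟩ := (Nat.dvd_prime_pow Nat.prime_two).mp hnat
  refine ⟨k, hk, fun x => ?_⟩
  have hdcast : ((d : ZMod (2^α)) = (2:ZMod (2^α))^k ∨ (d : ZMod (2^α)) = -((2:ZMod (2^α))^k)) := by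
    rcases Int.natAbs_eq d with h | h
    · left; rw [h, hdk]; push_cast; ring
    · right; rw [h, hdk]; push_cast; ring
  constructor
  · intro hx
    have hy : ((x.val : ℤ)) ∈ T := by
      simp only [hT, AddSubgroup.mem_comap, hf, Int.coe_castAddHom]
      have : (((x.val : ℤ)) : ZMod (2^α)) = x := by
        push_cast
        exact ZMod.natCast_rightInverse x
      rwa [this]
    obtain ⟨c, hc⟩ := (hmemT _).mp hy
    have hx' : x = ((c : ZMod (2^α))) * (d : ZMod (2^α)) := by
      have : (((x.val : ℤ)) : ZMod (2^α)) = x := by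
        push_cast
        exact ZMod.natCast_rightInverse x
      rw [← this, hc]
      push_cast
      ring
    rcases hdcast with h | h
    · exact ⟨c, by rw [hx', h]⟩
    · exact ⟨-c, by rw [hx', h]; ring⟩
  · rintro ⟨t, rfl⟩
    have hk2 : ((2:ZMod (2^α))^k) ∈ S := by
      have hd2 : d ∣ (2:ℤ)^k := by
        have : (d.natAbs : ℤ) ∣ (2:ℤ)^k := by
          rw [hdk]; push_cast; exact dvd_rfl
        exact (Int.natAbs_dvd).mp this
      have : ((2:ℤ)^k) ∈ T := (hmemT _).mpr hd2
      simp only [hT, AddSubgroup.mem_comap, hf, Int.coe_castAddHom] at this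
      have he : (((2:ℤ)^k : ℤ) : ZMod (2^α)) = (2:ZMod (2^α))^k := by push_cast; ring
      rwa [he] at this
    have : t * (2:ZMod (2^α))^k = t.val • ((2:ZMod (2^α))^k) := by
      rw [nsmul_eq_mul]
      congr 1
      exact (ZMod.natCast_rightInverse t).symm
    rw [this]
    exact S.nsmul_mem hk2 t.val

/-- the rotations lying in a subgroup of the dihedral group form an additive subgroup. -/
def rotSub {n : ℕ} (H : Subgroup (DihedralGroup n)) : AddSubgroup (ZMod n) where
  carrier := {m | r m ∈ H}
  zero_mem' := by
    have : (1 : DihedralGroup n) = r 0 := one_def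
    simpa [← this] using H.one_mem
  add_mem' := by
    intro a b ha hb
    have := H.mul_mem ha hb
    simpa [r_mul_r] using this
  neg_mem' := by
    intro a ha
    have := H.inv_mem ha
    simpa [r_inv] using this

theorem subgroup_char {α : ℕ} (H : Subgroup (DihedralGroup (2^α))) :
    (∃ k, k ≤ α ∧ H = csub (2^k)) ∨ (∃ k, k ≤ α ∧ ∃ i : ZMod (2^α), H = dsub (2^k) i) := by
  obtain ⟨k, hk, hS⟩ := addsubgroup_char (rotSub H)
  by_cases hsr : ∃ i, sr i ∈ H
  · obtain ⟨i, hi⟩ := hsr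
    refine Or.inr ⟨k, hk, i, ?_⟩
    ext x
    rcases x with m | m
    · rw [r_mem_dsub]; exact hS m
    · rw [sr_mem_dsub]
      constructor
      · intro hm
        have := H.mul_mem hi hm
        rw [sr_mul_sr] at this
        obtain ⟨t, ht⟩ := (hS _).mp this
        exact ⟨t, by rw [← ht]; ring⟩
      · rintro ⟨t, rfl⟩
        have h1 : r (t * 2^k) ∈ H := (hS _).mpr ⟨t, rfl⟩
        have := H.mul_mem hi h1
        rwa [sr_mul_r] at this
  · refine Or.inl ⟨k, hk, ?_⟩
    ext x
    rcases x with m | m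
    · rw [r_mem_csub]; exact hS m
    · simp only [sr_not_mem_csub, iff_false]
      exact fun h => hsr ⟨m, h⟩

theorem csub_zero_eq_bot {n : ℕ} : (csub (0 : ZMod n)) = ⊥ := by
  ext x
  rw [Subgroup.mem_bot, mem_csub]
  constructor
  · rintro ⟨t, rfl⟩; rw [one_def]; congr 1; ring
  · rintro rfl; exact ⟨0, by rw [one_def]; congr 1; ring⟩

theorem dsub_one_eq_top {n : ℕ} (i : ZMod n) : dsub (1 : ZMod n) i = ⊤ := by
  ext x
  simp only [Subgroup.mem_top, iff_true]
  rcases x with m | m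
  · exact Or.inl ⟨m, by ring_nf⟩
  · exact Or.inr ⟨m - i, by ring_nf⟩

theorem dsub_congr {n : ℕ} {d i i' : ZMod n} (h : ∃ t, i' = i + t * d) :
    dsub d i = dsub d i' := by
  obtain ⟨c, rfl⟩ := h
  ext x
  rw [mem_dsub, mem_dsub]
  constructor
  · rintro (⟨t, rfl⟩ | ⟨t, rfl⟩)
    · exact Or.inl ⟨t, rfl⟩
    · exact Or.inr ⟨t - c, by ring⟩
  · rintro (⟨t, rfl⟩ | ⟨t, rfl⟩)
    · exact Or.inl ⟨t, rfl⟩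
    · exact Or.inr ⟨c + t, by ring⟩


theorem csub_ne_bot {α k : ℕ} (hk : k < α) : csub ((2:ZMod (2^α))^k) ≠ ⊥ := by
  intro h
  have h1 : r ((2:ZMod (2^α))^k) ∈ csub ((2:ZMod (2^α))^k) := ⟨1, by ring⟩
  rw [h, Subgroup.mem_bot, one_def] at h1
  have h2 : (2:ZMod (2^α))^k = 0 := by injection h1
  have h3 := congrArg ZMod.val h2
  rw [val_two_pow hk, ZMod.val_zero] at h3
  exact (Nat.pos_of_ne_zero (pow_ne_zero k two_ne_zero)).ne' h3

theorem csub_ne_top {n : ℕ} (d : ZMod n) : csub d ≠ ⊤ := by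
  intro h
  have : sr 0 ∈ csub d := by rw [h]; trivial
  exact sr_not_mem_csub this

theorem dsub_ne_bot {n : ℕ} (d i : ZMod n) : dsub d i ≠ ⊥ := by
  intro h
  have h1 : sr i ∈ dsub d i := Or.inr ⟨0, by ring_nf⟩
  rw [h, Subgroup.mem_bot, one_def] at h1
  exact absurd h1 (by intro h; cases h)

theorem dsub_ne_top {α k : ℕ} (hk : 1 ≤ k) (hkα : k ≤ α) (i : ZMod (2^α)) :
    dsub ((2:ZMod (2^α))^k) i ≠ ⊤ := by
  intro h
  have h1 : sr (i + 2^(k-1)) ∈ dsub ((2:ZMod (2^α))^k) i := by rw [h]; trivial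
  rw [sr_mem_dsub] at h1
  obtain ⟨t, ht⟩ := h1
  have h2 : (2:ZMod (2^α))^(k-1) = t * 2^k := add_left_cancel ht
  have h3 : 2^k ∣ ((2:ZMod (2^α))^(k-1)).val := (pow_dvd_val_iff hkα _).mp ⟨t, h2⟩
  rw [val_two_pow (by omega)] at h3
  have := Nat.le_of_dvd (Nat.pos_of_ne_zero (pow_ne_zero _ two_ne_zero)) h3
  have := Nat.pow_lt_pow_right one_lt_two (show k - 1 < k by omega)
  omega

theorem csub_ne_dsub {n : ℕ} (d d' i : ZMod n) : csub d ≠ dsub d' i := by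
  intro h
  have h1 : sr i ∈ dsub d' i := Or.inr ⟨0, by ring_nf⟩
  rw [← h] at h1
  exact sr_not_mem_csub h1

theorem csub_inj {α k k' : ℕ} (hk : k < α) (hk' : k' < α)
    (h : csub ((2:ZMod (2^α))^k) = csub ((2:ZMod (2^α))^k')) : k = k' := by
  have key : ∀ a b : ℕ, a < α → b < α →
      csub ((2:ZMod (2^α))^a) = csub ((2:ZMod (2^α))^b) → b ≤ a := by
    intro a b ha hb hab
    have h1 : r ((2:ZMod (2^α))^a) ∈ csub ((2:ZMod (2^α))^a) := ⟨1, by ring⟩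
    rw [hab, r_mem_csub] at h1
    have h2 : 2^b ∣ ((2:ZMod (2^α))^a).val := (pow_dvd_val_iff hb.le _).mp h1
    rw [val_two_pow ha] at h2
    exact (Nat.pow_dvd_pow_iff_le_right one_lt_two).mp h2
  exact le_antisymm (key k' k hk' hk h.symm) (key k k' hk hk' h)

theorem dsub_le_aux {α k l : ℕ} (hkα : k ≤ α) (hlα : l ≤ α) {i j : ZMod (2^α)}
    (h : dsub ((2:ZMod (2^α))^k) i = dsub ((2:ZMod (2^α))^l) j) : k ≤ l := by
  rcases Nat.lt_or_ge l α with hllt | hle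
  · have h1 : r ((2:ZMod (2^α))^l) ∈ dsub ((2:ZMod (2^α))^l) j := Or.inl ⟨1, by ring⟩
    rw [← h, r_mem_dsub] at h1
    have h2 : 2^k ∣ ((2:ZMod (2^α))^l).val := (pow_dvd_val_iff hkα _).mp h1
    rw [val_two_pow hllt] at h2
    exact (Nat.pow_dvd_pow_iff_le_right one_lt_two).mp h2
  · omega

theorem dsub_inj {α k l : ℕ} (hkα : k ≤ α) (hlα : l ≤ α) {i j : ZMod (2^α)}
    (hi : i.val < 2^k) (hj : j.val < 2^l)
    (h : dsub ((2:ZMod (2^α))^k) i = dsub ((2:ZMod (2^α))^l) j) : k = l ∧ i = j := by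
  have hkl : k = l := le_antisymm (dsub_le_aux hkα hlα h) (dsub_le_aux hlα hkα h.symm)
  subst hkl
  refine ⟨rfl, ?_⟩
  have h1 : sr j ∈ dsub ((2:ZMod (2^α))^k) j := Or.inr ⟨0, by ring_nf⟩
  rw [← h, sr_mem_dsub] at h1
  have h2 : i.val ≡ j.val [MOD 2^k] := (exists_eq_add_iff hkα i j).mp h1
  exact ZMod.val_injective _ (h2.eq_of_lt_of_lt hi hj)


/-- index type for the dihedral-type proper subgroups -/
abbrev SIdx (α : ℕ) := Σ k : Fin α, Fin (2^(k.1+1))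

/-- model vertex type: `inl k` ↦ cyclic subgroup `⟨r^(2^k)⟩`, `inr ⟨k,i⟩` ↦ dihedral
subgroup `⟨r^(2^(k+1)), s r^i⟩`. -/
abbrev Model (α : ℕ) := (Fin α) ⊕ (SIdx α)

/-- permutability criterion on the model -/
def mok {α : ℕ} : Model α → Model α → Prop
  | Sum.inr ⟨k, i⟩, Sum.inr ⟨l, j⟩ => (i.1 : ℕ) ≡ j.1 [MOD 2^(min k.1 l.1)]
  | _, _ => True

@[simp] theorem mok_inl_left {α : ℕ} (a : Fin α) (y : Model α) : mok (Sum.inl a) y := by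
  cases y <;> trivial

@[simp] theorem mok_inl_right {α : ℕ} (x : Model α) (a : Fin α) : mok x (Sum.inl a) := by
  cases x <;> trivial

@[simp] theorem mok_inr_inr {α : ℕ} (a b : SIdx α) :
    mok (Sum.inr a) (Sum.inr b) ↔ (a.2.1 : ℕ) ≡ b.2.1 [MOD 2^(min a.1.1 b.1.1)] := by
  rcases a with ⟨k, i⟩; rcases b with ⟨l, j⟩; rfl

theorem mok_symm {α : ℕ} {x y : Model α} (h : mok x y) : mok y x := by
  rcases x with a | ⟨k, i⟩ <;> rcases y with b | ⟨l, j⟩ <;> simp_all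
  rw [min_comm]
  exact h.symm

theorem mok_refl {α : ℕ} (x : Model α) : mok x x := by
  rcases x with a | ⟨k, i⟩ <;> simp [Nat.ModEq.refl]

instance mokDec {α : ℕ} : ∀ x y : Model α, Decidable (mok x y)
  | Sum.inl _, Sum.inl _ => isTrue trivial
  | Sum.inl _, Sum.inr _ => isTrue trivial
  | Sum.inr _, Sum.inl _ => isTrue trivial
  | Sum.inr ⟨k, i⟩, Sum.inr ⟨l, j⟩ =>
      inferInstanceAs (Decidable ((i.1 : ℕ) % _ = _ % _))

/-- the model graph -/
def MG (α : ℕ) : SimpleGraph (Model α) where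
  Adj x y := x ≠ y ∧ mok x y
  symm := ⟨fun _ _ ⟨hne, h⟩ => ⟨hne.symm, mok_symm h⟩⟩
  loopless := ⟨fun _ ⟨hne, _⟩ => hne rfl⟩

instance {α : ℕ} : DecidableRel (MG α).Adj := fun _ _ =>
  inferInstanceAs (Decidable (_ ∧ _))

/-- darts of a graph biject with ordered adjacent pairs -/
def dartEquiv {V : Type*} (G : SimpleGraph V) : G.Dart ≃ {p : V × V // G.Adj p.1 p.2} where
  toFun d := ⟨d.toProd, d.adj⟩
  invFun p := ⟨p.1, p.2⟩
  left_inv d := by cases d; rfl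
  right_inv p := rfl

theorem two_mul_card_edgeSet {V : Type*} [Fintype V] [DecidableEq V] (G : SimpleGraph V)
    [DecidableRel G.Adj] :
    2 * Nat.card G.edgeSet = Fintype.card {p : V × V // G.Adj p.1 p.2} := by
  rw [Nat.card_eq_fintype_card, ← SimpleGraph.edgeFinset_card,
    ← SimpleGraph.dart_card_eq_twice_card_edges]
  exact Fintype.card_congr (dartEquiv G)

theorem card_modeq_aux (m b i : ℕ) (hmb : m ≤ b) :
    Fintype.card {j : Fin (2^b) // i ≡ (j : ℕ) [MOD 2^m]} = 2^(b-m) := by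
  have hpos : 0 < 2^m := Nat.pos_of_ne_zero (pow_ne_zero _ two_ne_zero)
  refine Fintype.card_congr ?_ |>.trans (Fintype.card_fin _)
  refine ⟨fun j => ⟨j.1.1 / 2^m, ?_⟩, fun q => ⟨⟨i % 2^m + q.1 * 2^m, ?_⟩, ?_⟩, ?_, ?_⟩
  · have hj : j.1.1 < 2^b := j.1.2
    rw [Nat.div_lt_iff_lt_mul hpos, ← pow_add]
    rwa [show b - m + m = b by omega]
  · have h1 : i % 2^m < 2^m := Nat.mod_lt _ hpos
    have h2 : q.1 < 2^(b-m) := q.2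
    calc i % 2^m + q.1 * 2^m < 2^m + q.1 * 2^m := by omega
    _ = (q.1 + 1) * 2^m := by ring
    _ ≤ 2^(b-m) * 2^m := Nat.mul_le_mul_right _ (by omega)
    _ = 2^b := by rw [← pow_add]; congr 1; omega
  · show i % 2^m = (i % 2^m + q.1 * 2^m) % 2^m
    simp [Nat.add_mul_mod_self_right, Nat.mod_mod_of_dvd]
  · rintro ⟨⟨j, hj⟩, hmod⟩
    ext
    show i % 2^m + j / 2^m * 2^m = j
    have : i % 2^m = j % 2^m := hmod
    rw [this, Nat.mod_add_div']
  · rintro ⟨q, hq⟩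
    ext
    show (i % 2^m + q * 2^m) / 2^m = q
    rw [Nat.add_mul_div_right _ _ hpos, Nat.div_eq_of_lt (Nat.mod_lt _ hpos), zero_add]

-- counting scaffold (to be merged)

/-- sigma-subtype rearrangement -/
def sigmaSubtypeEquiv {ι : Type*} {T : ι → Type*} (Q : (Σ l, T l) → Prop) :
    {y : Σ l, T l // Q y} ≃ Σ l, {t : T l // Q ⟨l, t⟩} where
  toFun y := ⟨y.1.1, y.1.2, by rcases y with ⟨⟨l, t⟩, h⟩; exact h⟩
  invFun z := ⟨⟨z.1, z.2.1⟩, z.2.2⟩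
  left_inv := by rintro ⟨⟨l, t⟩, h⟩; rfl
  right_inv := by rintro ⟨l, t, h⟩; rfl

variable {α : ℕ}

open Finset

theorem geom_sum_int (α : ℕ) : ∑ k ∈ range α, (2:ℤ)^(k+1) = 2^(α+1) - 2 := by
  induction α with
  | zero => simp
  | succ a ih => rw [sum_range_succ, ih]; ring

theorem double_sum_int (α : ℕ) :
    ∑ k ∈ range α, ∑ l ∈ range α, (2:ℤ)^(k+1) * 2^(l+1-min k l)
      = 4 * ((2*(α:ℤ) - 3) * 2^α + 3) := by
  induction α with
  | zero => simp
  | succ a ih =>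
    rw [sum_range_succ]
    have hrow : ∀ k ∈ range a, ∑ l ∈ range (a+1), (2:ℤ)^(k+1) * 2^(l+1-min k l)
        = (∑ l ∈ range a, (2:ℤ)^(k+1) * 2^(l+1-min k l)) + 2^(a+2) := by
      intro k hk
      rw [sum_range_succ]
      congr 1
      rw [min_eq_left (by simp at hk; omega), ← pow_add]
      congr 1
      simp at hk
      omega
    rw [sum_congr rfl hrow, sum_add_distrib, ih, sum_const, card_range]
    have hlast : ∑ l ∈ range (a+1), (2:ℤ)^(a+1) * 2^(l+1-min a l)
        = (a:ℤ) * 2^(a+2) + 2^(a+2) := by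
      rw [sum_range_succ]
      have h1 : ∀ l ∈ range a, (2:ℤ)^(a+1) * 2^(l+1-min a l) = 2^(a+2) := by
        intro l hl
        simp only [mem_range] at hl
        rw [min_eq_right (by omega), ← pow_add]
        congr 1
        omega
      rw [sum_congr rfl h1, sum_const, card_range, min_self,
        show a+1-a = 1 by omega]
      push_cast
      ring
    rw [hlast]
    push_cast
    ring


open Finset

/-- the permutability predicate on dihedral indices -/
def P2 {α : ℕ} (a b : SIdx α) : Prop := (a.2.1 : ℕ) ≡ b.2.1 [MOD 2^(min a.1.1 b.1.1)]

instance {α : ℕ} (a b : SIdx α) : Decidable (P2 a b) :=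
  inferInstanceAs (Decidable (_ % _ = _ % _))

theorem mok_inr_iff {α : ℕ} (a b : SIdx α) : mok (Sum.inr a) (Sum.inr b) ↔ P2 a b := by
  rcases a with ⟨k, i⟩; rcases b with ⟨l, j⟩; rfl

/-- the diagonal of a product type -/
def diagEquiv {V : Type*} : {p : V × V // p.1 = p.2} ≃ V where
  toFun p := p.1.1
  invFun v := ⟨(v, v), rfl⟩
  left_inv := by rintro ⟨⟨a, b⟩, h⟩; cases h; rfl
  right_inv v := rfl

def notmokEquiv {α : ℕ} :
    {p : Model α × Model α // ¬ mok p.1 p.2} ≃ {q : SIdx α × SIdx α // ¬ P2 q.1 q.2} where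
  toFun p := match p with
    | ⟨(Sum.inr a, Sum.inr b), h⟩ => ⟨(a, b), fun hq => h ((mok_inr_iff a b).mpr hq)⟩
    | ⟨(Sum.inl a, y), h⟩ => absurd (mok_inl_left a y) h
    | ⟨(Sum.inr _, Sum.inl b), h⟩ => absurd (mok_inl_right _ b) h
  invFun q := ⟨(Sum.inr q.1.1, Sum.inr q.1.2), fun hm => q.2 ((mok_inr_iff _ _).mp hm)⟩
  left_inv := by
    rintro ⟨⟨x | a, y | b⟩, h⟩
    · exact absurd (mok_inl_left _ _) h
    · exact absurd (mok_inl_left _ _) h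
    · exact absurd (mok_inl_right _ _) h
    · rfl
  right_inv := by rintro ⟨⟨a, b⟩, h⟩; rfl

theorem count_main (α : ℕ) :
    Fintype.card {p : Model α × Model α // (MG α).Adj p.1 p.2}
      + Fintype.card (Model α)
      + Fintype.card {q : SIdx α × SIdx α // ¬ P2 q.1 q.2}
    = Fintype.card (Model α) * Fintype.card (Model α) := by
  have e1 := card_filter_add_card_filter_not
    (s := (univ : Finset (Model α × Model α))) (p := fun p => p.1 = p.2)
  have e2 := card_filter_add_card_filter_not
    (s := (univ : Finset (Model α × Model α)).filter (fun p => ¬ p.1 = p.2))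
    (p := fun p => mok p.1 p.2)
  rw [filter_filter, filter_filter] at e2
  have e3 : ((univ : Finset (Model α × Model α)).filter fun p => ¬ p.1 = p.2 ∧ mok p.1 p.2)
      = (univ.filter fun p => (MG α).Adj p.1 p.2) :=
    filter_congr (fun p _ => Iff.rfl)
  have e4 : ((univ : Finset (Model α × Model α)).filter fun p => ¬ p.1 = p.2 ∧ ¬ mok p.1 p.2)
      = (univ.filter fun p => ¬ mok p.1 p.2) :=
    filter_congr (fun p _ => ⟨And.right, fun h => ⟨fun he => h (he ▸ mok_refl p.1), h⟩⟩)
  rw [e3, e4] at e2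
  have e5 : #((univ : Finset (Model α × Model α)).filter fun p => p.1 = p.2)
      = Fintype.card (Model α) := by
    rw [← Fintype.card_subtype]
    exact Fintype.card_congr diagEquiv
  have e6 : #((univ : Finset (Model α × Model α)).filter fun p => ¬ mok p.1 p.2)
      = Fintype.card {q : SIdx α × SIdx α // ¬ P2 q.1 q.2} := by
    rw [← Fintype.card_subtype]
    exact Fintype.card_congr notmokEquiv
  have e7 : #((univ : Finset (Model α × Model α)).filter fun p => (MG α).Adj p.1 p.2)
      = Fintype.card {p : Model α × Model α // (MG α).Adj p.1 p.2} :=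
    (Fintype.card_subtype _).symm
  have e8 : #(univ : Finset (Model α × Model α))
      = Fintype.card (Model α) * Fintype.card (Model α) := by
    rw [card_univ, Fintype.card_prod]
  omega

theorem count_S (α : ℕ) :
    Fintype.card {q : SIdx α × SIdx α // P2 q.1 q.2}
      + Fintype.card {q : SIdx α × SIdx α // ¬ P2 q.1 q.2}
    = Fintype.card (SIdx α) * Fintype.card (SIdx α) := by
  have e1 := card_filter_add_card_filter_not
    (s := (univ : Finset (SIdx α × SIdx α))) (p := fun q => P2 q.1 q.2)
  rw [Fintype.card_subtype, Fintype.card_subtype]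
  rw [← Fintype.card_prod, ← card_univ]
  exact e1

theorem Cm_eq (α : ℕ) :
    Fintype.card {q : SIdx α × SIdx α // P2 q.1 q.2}
      = ∑ k ∈ range α, 2^(k+1) * ∑ l ∈ range α, 2^(l+1 - min k l) := by
  rw [Fintype.card_congr (Equiv.subtypeProdEquivSigmaSubtype (fun a b : SIdx α => P2 a b)),
    Fintype.card_sigma]
  have hinner : ∀ a : SIdx α,
      Fintype.card {b : SIdx α // P2 a b} = ∑ l ∈ range α, 2^(l+1 - min a.1.1 l) := by
    intro a
    rw [Fintype.card_congr (sigmaSubtypeEquiv (fun b : SIdx α => P2 a b)), Fintype.card_sigma,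
      ← Fin.sum_univ_eq_sum_range]
    apply Finset.sum_congr rfl
    intro l _
    exact card_modeq_aux (min a.1.1 l.1) (l.1+1) a.2.1 (by omega)
  rw [Finset.sum_congr rfl (fun a _ => hinner a)]
  rw [← Finset.univ_sigma_univ, Finset.sum_sigma, ← Fin.sum_univ_eq_sum_range]
  apply Finset.sum_congr rfl
  intro k _
  trans (∑ _s : Fin (2^(k.1+1)), ∑ l ∈ range α, 2^(l+1 - min k.1 l))
  · rfl
  · rw [sum_const, card_univ, Fintype.card_fin, smul_eq_mul]

theorem double_sum_int2 (α : ℕ) :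
    ∑ k ∈ range α, ((2:ℤ)^(k+1) * ∑ l ∈ range α, (2:ℤ)^(l+1-min k l))
      = 4 * ((2*(α:ℤ) - 3) * 2^α + 3) := by
  rw [← double_sum_int α]
  apply Finset.sum_congr rfl
  intro k _
  rw [Finset.mul_sum]

theorem NS_card (α : ℕ) : Fintype.card (SIdx α) = ∑ k ∈ range α, 2^(k+1) := by
  rw [Fintype.card_sigma, ← Fin.sum_univ_eq_sum_range]
  simp

theorem NV_card (α : ℕ) : Fintype.card (Model α) = α + Fintype.card (SIdx α) := by
  rw [Fintype.card_sum, Fintype.card_fin]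

theorem model_count (α : ℕ) :
    (2 * Nat.card (MG α).edgeSet : ℤ)
      = 2^(α+1) * (6*(α:ℤ) - 7) + (α:ℤ)^2 - 5*(α:ℤ) + 14 := by
  have h1 := two_mul_card_edgeSet (MG α)
  have h2 := count_main α
  have h3 := count_S α
  have hCm := Cm_eq α
  have hNS := NS_card α
  have hNV := NV_card α
  set A := Fintype.card {p : Model α × Model α // (MG α).Adj p.1 p.2} with hA
  set B := Fintype.card {q : SIdx α × SIdx α // ¬ P2 q.1 q.2} with hBdef
  set Cm := Fintype.card {q : SIdx α × SIdx α // P2 q.1 q.2} with hCmdef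
  set NS := Fintype.card (SIdx α) with hNSdef
  set NV := Fintype.card (Model α) with hNVdef
  have iA : (A:ℤ) + NV + B = (NV:ℤ) * NV := by exact_mod_cast congrArg (Nat.cast (R := ℤ)) h2
  have iB : (Cm:ℤ) + B = (NS:ℤ) * NS := by exact_mod_cast congrArg (Nat.cast (R := ℤ)) h3
  have iNV : (NV:ℤ) = α + NS := by exact_mod_cast congrArg (Nat.cast (R := ℤ)) hNV
  have iNS : (NS:ℤ) = 2^(α+1) - 2 := by
    have := congrArg (Nat.cast (R := ℤ)) hNS
    push_cast at this
    rw [this, geom_sum_int]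
  have iCm : (Cm:ℤ) = 4 * ((2*(α:ℤ) - 3) * 2^α + 3) := by
    have := congrArg (Nat.cast (R := ℤ)) hCm
    push_cast at this
    rw [this, double_sum_int2]
  have hgoal : ((2 * Nat.card (MG α).edgeSet : ℕ) : ℤ) = (A:ℤ) := by exact_mod_cast congrArg (Nat.cast (R := ℤ)) h1
  push_cast at hgoal
  rw [hgoal]
  have hAeq : (A:ℤ) = (NV:ℤ)*(NV:ℤ) - NV - B := by linarith
  have hBeq : (B:ℤ) = (NS:ℤ)*(NS:ℤ) - Cm := by linarith
  rw [hAeq, hBeq, iNV, iNS, iCm]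
  ring


/-! ### Bridge between the group side and the model -/

abbrev Vert (α : ℕ) := {H : Subgroup (DihedralGroup (2^α)) // H ≠ ⊥ ∧ H ≠ ⊤}

def toVert {α : ℕ} : Model α → Vert α
  | Sum.inl k => ⟨csub ((2:ZMod (2^α))^k.1), csub_ne_bot k.2, csub_ne_top _⟩
  | Sum.inr ⟨k, i⟩ => ⟨dsub ((2:ZMod (2^α))^(k.1+1)) ((i.1 : ZMod (2^α))),
      dsub_ne_bot _ _, dsub_ne_top (by omega) (by have := k.2; omega) _⟩

theorem val_cast_lt {α : ℕ} {k : Fin α} (i : Fin (2^(k.1+1))) :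
    ((i.1 : ZMod (2^α)) : ZMod (2^α)).val = i.1 := by
  apply ZMod.val_cast_of_lt
  calc i.1 < 2^(k.1+1) := i.2
  _ ≤ 2^α := Nat.pow_le_pow_right (by norm_num) (by have := k.2; omega)

theorem toVert_inj {α : ℕ} : Function.Injective (toVert (α := α)) := by
  rintro (a | ⟨k, i⟩) (b | ⟨l, j⟩) h
  · have h' := congrArg Subtype.val h
    have := csub_inj a.2 b.2 h'
    congr 1
    exact Fin.ext this
  · exact absurd (congrArg Subtype.val h) (csub_ne_dsub _ _ _)
  · exact absurd (congrArg Subtype.val h).symm (csub_ne_dsub _ _ _)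
  · have h' := congrArg Subtype.val h
    have hi : ((i.1 : ZMod (2^α))).val < 2^(k.1+1) := by rw [val_cast_lt i]; exact i.2
    have hj : ((j.1 : ZMod (2^α))).val < 2^(l.1+1) := by rw [val_cast_lt j]; exact j.2
    obtain ⟨hkl, hij⟩ := dsub_inj (by have := k.2; omega) (by have := l.2; omega) hi hj h'
    have hkl' : k = l := Fin.ext (by omega)
    subst hkl'
    have : i.1 = j.1 := by
      have := congrArg ZMod.val hij
      rwa [val_cast_lt i, val_cast_lt j] at this
    congr 2
    exact Fin.ext this

theorem toVert_surj {α : ℕ} : Function.Surjective (toVert (α := α)) := by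
  rintro ⟨H, hb, ht⟩
  rcases subgroup_char H with ⟨k, hk, rfl⟩ | ⟨k, hk, i, rfl⟩
  · have hklt : k < α := by
      rcases Nat.lt_or_ge k α with h | h
      · exact h
      · exfalso
        have hke : k = α := by omega
        subst hke
        exact hb (by rw [two_pow_top]; exact csub_zero_eq_bot)
    exact ⟨Sum.inl ⟨k, hklt⟩, Subtype.ext rfl⟩
  · have hk1 : 1 ≤ k := by
      by_contra h
      exact ht (by rw [show k = 0 by omega, pow_zero]; exact dsub_one_eq_top i)
    have hpos : 0 < 2^k := Nat.pos_of_ne_zero (pow_ne_zero _ two_ne_zero)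
    refine ⟨Sum.inr ⟨⟨k-1, by omega⟩, ⟨i.val % 2^k, ?_⟩⟩, Subtype.ext ?_⟩
    · rw [show (k-1)+1 = k by omega]
      exact Nat.mod_lt _ hpos
    · show dsub ((2:ZMod (2^α))^((k-1)+1)) (((i.val % 2^k : ℕ) : ZMod (2^α))) = dsub ((2:ZMod (2^α))^k) i
      rw [show (k-1)+1 = k by omega]
      refine (dsub_congr ⟨-(((i.val / 2^k : ℕ) : ZMod (2^α))), ?_⟩).symm
      have hdm : 2^k * (i.val / 2^k) + i.val % 2^k = i.val := Nat.div_add_mod _ _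
      have hcast : (((2^k * (i.val / 2^k) + i.val % 2^k : ℕ)) : ZMod (2^α))
          = ((i.val : ℕ) : ZMod (2^α)) := by rw [hdm]
      push_cast at hcast
      rw [ZMod.natCast_rightInverse i] at hcast
      linear_combination hcast

theorem comm_transfer {α : ℕ} (x y : Model α) :
    ((((toVert x).1 : Subgroup (DihedralGroup (2^α))) : Set (DihedralGroup (2^α)))
        * (((toVert y).1 : Subgroup (DihedralGroup (2^α))) : Set (DihedralGroup (2^α)))
      = (((toVert y).1 : Subgroup (DihedralGroup (2^α))) : Set (DihedralGroup (2^α)))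
        * (((toVert x).1 : Subgroup (DihedralGroup (2^α))) : Set (DihedralGroup (2^α))))
      ↔ mok x y := by
  rcases x with a | ⟨k, i⟩
  · refine iff_of_true ?_ (mok_inl_left a _)
    show ((csub ((2:ZMod (2^α))^a.1) : Set (DihedralGroup (2^α))) * _ = _)
    exact normal_comm _ _
  · rcases y with b | ⟨l, j⟩
    · refine iff_of_true ?_ (mok_inl_right _ b)
      haveI : ((toVert (Sum.inl b : Model α)).1).Normal := csub_normal _
      exact (normal_comm _ _).symm
    · rw [mok_inr_iff]
      have hk2 := k.2
      have hl2 := l.2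
      show ((dsub ((2:ZMod (2^α))^(k.1+1)) ((i.1 : ZMod (2^α))) : Set (DihedralGroup (2^α)))
            * (dsub ((2:ZMod (2^α))^(l.1+1)) ((j.1 : ZMod (2^α))) : Set (DihedralGroup (2^α)))
          = (dsub ((2:ZMod (2^α))^(l.1+1)) ((j.1 : ZMod (2^α))) : Set (DihedralGroup (2^α)))
            * (dsub ((2:ZMod (2^α))^(k.1+1)) ((i.1 : ZMod (2^α))) : Set (DihedralGroup (2^α))))
          ↔ P2 ⟨k, i⟩ ⟨l, j⟩
      rcases le_total k.1 l.1 with hkl | hkl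
      · rw [dsub_comm_iff (by omega) (by omega) (by omega),
          exists_eq_add_iff (by omega)]
        show _ ≡ _ [MOD 2^((k.1+1)-1)] ↔ P2 ⟨k, i⟩ ⟨l, j⟩
        unfold P2
        rw [val_cast_lt i, val_cast_lt j]
        simp only []
        rw [show (k.1+1)-1 = k.1 by omega, min_eq_left hkl]
      · rw [eq_comm, dsub_comm_iff (by omega) (by omega) (by omega),
          exists_eq_add_iff (by omega)]
        show _ ≡ _ [MOD 2^((l.1+1)-1)] ↔ P2 ⟨k, i⟩ ⟨l, j⟩
        unfold P2
        rw [val_cast_lt j, val_cast_lt i]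
        simp only []
        rw [show (l.1+1)-1 = l.1 by omega, min_eq_right hkl]
        exact ⟨Nat.ModEq.symm, Nat.ModEq.symm⟩

theorem adj_transfer {α : ℕ} (x y : Model α) :
    (permGraph (DihedralGroup (2^α))).Adj (toVert x) (toVert y) ↔ (MG α).Adj x y := by
  show (toVert x ≠ toVert y ∧ _) ↔ (x ≠ y ∧ mok x y)
  exact and_congr toVert_inj.ne_iff (comm_transfer x y)

noncomputable def modelIso (α : ℕ) : MG α ≃g permGraph (DihedralGroup (2^α)) where
  toEquiv := Equiv.ofBijective toVert ⟨toVert_inj, toVert_surj⟩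
  map_rel_iff' := by intro x y; exact adj_transfer x y

end S12

theorem stmt_12 (α : ℕ) (hα : 2 ≤ α) :
    (2 * Nat.card (permGraph (DihedralGroup (2 ^ α))).edgeSet : ℤ) =
      2 ^ (α + 1) * (6 * (α : ℤ) - 7) + (α : ℤ) ^ 2 - 5 * (α : ℤ) + 14 := by
  have hcard : Nat.card (permGraph (DihedralGroup (2^α))).edgeSet
      = Nat.card (S12.MG α).edgeSet :=
    (Nat.card_congr (S12.modelIso α).mapEdgeSet).symm
  rw [hcard]
  exact S12.model_count α
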